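/- Let (X, F) be a set system and let s₁ < s₂ be positive integers. Then opR_{s₁}(F) ≥ ⌊s₂/s₁⌋ · opR_{s₂}(F); in particular, if there is a 2^{s₂}-ary element tree of height n₂ with labels from X in which every leaf can be properly labeled by a member of F, then there is a 2^{s₁}-ary element tree of height ⌊s₂/s₁⌋·n₂ with labels from X in which every leaf can be properly labeled by a member of F. -/

import Mathlib

/-- A leaf `ξ ∈ (2^s)^n` of a `2^s`-ary element tree `T` is properly labeled by `A ⊆ X`
if for all `j < n` and `i < s`, the `i`-th coordinate of the label of the initial segment
`ξ|_{[j]}` belongs to `A` iff `ξ(j)(i) = 1`. -/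
def OpProper {X : Type*} {s : ℕ} (T : List (Fin s → Bool) → (Fin s → X)) {n : ℕ}
    (ξ : Fin n → (Fin s → Bool)) (A : Set X) : Prop :=
  ∀ (j : Fin n) (i : Fin s), (T ((List.ofFn ξ).take j.1) i ∈ A ↔ ξ j i = true)

/-- There is a `2^s`-ary element tree of height `k` with labels from `X` in which every leaf
is properly labeled by some member of `F`. -/
def HasOpTree {X : Type*} (F : Set (Set X)) (s k : ℕ) : Prop :=
  ∃ T : List (Fin s → Bool) → (Fin s → X),
    ∀ ξ : Fin k → (Fin s → Bool), ∃ A ∈ F, OpProper T ξ A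

/-- The `op_s`-rank of `F`, as an extended natural number: the supremum of the heights of
`2^s`-ary element trees in which every leaf is properly labeled by some member of `F`. -/
noncomputable def opRank {X : Type*} (F : Set (Set X)) (s : ℕ) : ℕ∞ :=
  sSup {k : ℕ∞ | ∃ m : ℕ, k = (m : ℕ∞) ∧ HasOpTree F s m}

lemma hasOpTree_change {X : Type*} (F : Set (Set X)) (s₁ s₂ q n₂ : ℕ)
    (hs₁ : 0 < s₁) (hq : 0 < q) (hqs : q * s₁ ≤ s₂)
    (h : HasOpTree F s₂ n₂) : HasOpTree F s₁ (q * n₂) := by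
  obtain ⟨T₂, hT₂⟩ := h
  -- index arithmetic facts
  have hidx : ∀ i : ℕ, i < q * s₁ → i / s₁ < q := fun i hi =>
    Nat.div_lt_iff_lt_mul hs₁ |>.mpr (by rwa [mul_comm] at hi ⊢)
  -- grouping of a partial path into s₂-blocks
  let grp : List (Fin s₁ → Bool) → List (Fin s₂ → Bool) := fun p =>
    List.ofFn (n := p.length / q) fun k (i : Fin s₂) =>
      if h : (i : ℕ) < q * s₁ then
        (p.getD (k.1 * q + i.1 / s₁) (fun _ => false)) ⟨i.1 % s₁, Nat.mod_lt _ hs₁⟩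
      else false
  -- the new tree
  have hlt : ∀ (r i : ℕ), r < q → i < s₁ → r * s₁ + i < s₂ := by
    intro r i hr hi
    calc r * s₁ + i < r * s₁ + s₁ := by omega
    _ = (r + 1) * s₁ := by ring
    _ ≤ q * s₁ := Nat.mul_le_mul_right _ (by omega)
    _ ≤ s₂ := hqs
  let T₁ : List (Fin s₁ → Bool) → (Fin s₁ → X) := fun p i =>
    T₂ (grp p) ⟨(p.length % q) * s₁ + i.1, hlt _ _ (Nat.mod_lt _ hq) i.2⟩
  refine ⟨T₁, fun ξ => ?_⟩
  -- the corresponding s₂-leaf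
  have hblk : ∀ (k : ℕ) (i : ℕ), k < n₂ → i < q * s₁ → k * q + i / s₁ < q * n₂ := by
    intro k i hk hi
    have h2 := hidx i hi
    calc k * q + i / s₁ < k * q + q := by omega
    _ = (k + 1) * q := by ring
    _ ≤ n₂ * q := Nat.mul_le_mul_right _ (by omega)
    _ = q * n₂ := mul_comm _ _
  let ξ₂ : Fin n₂ → (Fin s₂ → Bool) := fun k i =>
    if h : (i : ℕ) < q * s₁ then
      ξ ⟨k.1 * q + i.1 / s₁, hblk _ _ k.2 h⟩ ⟨i.1 % s₁, Nat.mod_lt _ hs₁⟩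
    else false
  obtain ⟨A, hA, hprop⟩ := hT₂ ξ₂
  refine ⟨A, hA, fun j i => ?_⟩
  -- decompose j = a*q + b
  set a := j.1 / q with ha_def
  set b := j.1 % q with hb_def
  have hb : b < q := Nat.mod_lt _ hq
  have ha : a < n₂ := Nat.div_lt_iff_lt_mul hq |>.mpr (lt_of_lt_of_le j.2 (le_of_eq (mul_comm q n₂)))
  have hab : a * q + b = j.1 := by rw [ha_def, hb_def, mul_comm]; exact Nat.div_add_mod _ _
  set p := (List.ofFn ξ).take j.1 with hp_def
  have hplen : p.length = j.1 := by
    simp [hp_def, List.length_take, Nat.le_of_lt j.2]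
  -- the grouped list equals the corresponding initial segment of ξ₂'s tree
  have hgrp : grp p = (List.ofFn ξ₂).take a := by
    apply List.ext_getElem
    · simp [grp, hplen, ha_def, Nat.le_of_lt ha]; exact Nat.le_of_lt ha
    · intro k h1 h2
      have hk : k < a := by simpa [grp, hplen] using h1
      simp only [grp, List.getElem_ofFn, List.getElem_take]
      funext i
      by_cases hi : (i : ℕ) < q * s₁
      · have hkq : k * q + i.1 / s₁ < j.1 := by
          have h2 := hidx i.1 hi
          have : k * q + i.1 / s₁ < a * q := by
            calc k * q + i.1 / s₁ < k * q + q := by omega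
            _ = (k + 1) * q := by ring
            _ ≤ a * q := Nat.mul_le_mul_right _ (by omega)
          have : a * q ≤ j.1 := Nat.div_mul_le_self _ _
          omega
        have hgd : p.getD (k * q + i.1 / s₁) (fun _ => false)
            = ξ ⟨k * q + i.1 / s₁, lt_trans hkq j.2⟩ := by
          rw [List.getD_eq_getElem _ _ (by rw [hplen]; exact hkq)]
          simp [hp_def, List.getElem_take, List.getElem_ofFn]
        simp only [hi, dif_pos, hgd, ξ₂]
      · simp only [hi, dif_neg, not_false_iff, ξ₂]
  -- apply properness of the s₂-leaf
  have key := hprop ⟨a, ha⟩ ⟨b * s₁ + i.1, hlt _ _ hb i.2⟩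
  have hT₁eq : T₁ p i = T₂ ((List.ofFn ξ₂).take a) ⟨b * s₁ + i.1, hlt _ _ hb i.2⟩ := by
    have hfin : (⟨(p.length % q) * s₁ + i.1, hlt _ _ (Nat.mod_lt _ hq) i.2⟩ : Fin s₂)
        = ⟨b * s₁ + i.1, hlt _ _ hb i.2⟩ := by
      apply Fin.ext; simp [hplen, hb_def]
    show T₂ (grp p) _ = _
    rw [hgrp, hfin]
  have hξ₂ : ξ₂ ⟨a, ha⟩ ⟨b * s₁ + i.1, hlt _ _ hb i.2⟩ = ξ j i := by
    have h1 : b * s₁ + i.1 < q * s₁ := by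
      have h2 : (b + 1) * s₁ ≤ q * s₁ := Nat.mul_le_mul_right _ hb
      have h3 := i.2
      rw [add_mul, one_mul] at h2
      omega
    simp only [ξ₂, h1, dif_pos]
    have hd : (b * s₁ + i.1) / s₁ = b := by
      rw [mul_comm, Nat.mul_add_div hs₁, Nat.div_eq_of_lt i.2, add_zero]
    have hm : (b * s₁ + i.1) % s₁ = i.1 := by
      rw [mul_comm, Nat.mul_add_mod, Nat.mod_eq_of_lt i.2]
    congr 1
    · apply Fin.ext; simp [hd, hab]
    · apply Fin.ext; simp [hm]
  rw [show T₁ p i = _ from hT₁eq, key, hξ₂]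

/-- For `0 < s₁ < s₂`: `opR_{s₁}(F) ≥ ⌊s₂/s₁⌋·opR_{s₂}(F)`; in particular, if there is a
`2^{s₂}`-ary element tree of height `n₂` in which every leaf is properly labeled by a member
of `F`, then there is such a `2^{s₁}`-ary element tree of height `⌊s₂/s₁⌋·n₂`. -/
theorem op_rank_change_base {X : Type*} (F : Set (Set X)) (s₁ s₂ : ℕ)
    (hs₁ : 1 ≤ s₁) (hs : s₁ < s₂) :
    ((s₂ / s₁ : ℕ) : ℕ∞) * opRank F s₂ ≤ opRank F s₁ ∧
    ∀ n₂ : ℕ, HasOpTree F s₂ n₂ → HasOpTree F s₁ (s₂ / s₁ * n₂) := by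
  have hq : 1 ≤ s₂ / s₁ := (Nat.one_le_div_iff hs₁).mpr (le_of_lt hs)
  have key : ∀ n₂ : ℕ, HasOpTree F s₂ n₂ → HasOpTree F s₁ (s₂ / s₁ * n₂) :=
    fun n₂ h => hasOpTree_change F s₁ s₂ (s₂ / s₁) n₂ hs₁ hq (Nat.div_mul_le_self _ _) h
  refine ⟨?_, key⟩
  set q := s₂ / s₁ with hq_def
  unfold opRank
  set S₂ := {k : ℕ∞ | ∃ m : ℕ, k = (m : ℕ∞) ∧ HasOpTree F s₂ m} with hS₂
  set S₁ := {k : ℕ∞ | ∃ m : ℕ, k = (m : ℕ∞) ∧ HasOpTree F s₁ m} with hS₁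
  rcases S₂.eq_empty_or_nonempty with hne | hne
  · rw [hne, sSup_empty]
    simp
  · by_cases htop : sSup S₂ = ⊤
    · suffices h : sSup S₁ = ⊤ by rw [h]; exact le_top
      rw [sSup_eq_top]
      intro b hb
      lift b to ℕ using hb.ne
      obtain ⟨k, hk, hbk⟩ := (sSup_eq_top.mp htop) b (by exact_mod_cast hb)
      obtain ⟨m, rfl, htree⟩ := hk
      refine ⟨((q * m : ℕ) : ℕ∞), ⟨q * m, rfl, key m htree⟩, ?_⟩
      have : b < m := by exact_mod_cast hbk
      have : m ≤ q * m := Nat.le_mul_of_pos_left m hq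
      exact_mod_cast (by omega : b < q * m)
    · haveI : Nonempty S₂ := hne.to_subtype
      obtain ⟨m, hm, htree⟩ :=
        ENat.sSup_mem_of_nonempty_of_lt_top (lt_top_iff_ne_top.mpr htop)
      rw [hm]
      have hmem : ((q * m : ℕ) : ℕ∞) ∈ S₁ := ⟨q * m, rfl, key m htree⟩
      calc ((q : ℕ) : ℕ∞) * (m : ℕ∞) = ((q * m : ℕ) : ℕ∞) := by push_cast; ring
      _ ≤ sSup S₁ := le_sSup hmem
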